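/- Let μ ≠ 0, a > 0, T > 0 and let v : (0,∞) → ℝ be twice differentiable. Suppose r₀ > 0, s₀ > 0 satisfy T = r₀·v'(r₀) and μ² = s₀²·r₀³·v'(r₀), and suppose further that v'(r₀) > 0 and r₀·v''(r₀) + v'(r₀) > 0. Then the Hessian matrix (the 4×4 matrix of second partial derivatives in the variables (r, p_r, s, S)) of the reduced Nosé-thermostated Hamiltonian 𝐇_μ at the point (r₀, 0, s₀, 0) is positive definite. -/

import Mathlib

/-- The reduced Nosé-thermostated Hamiltonian
`𝐇_μ(r, p_r, s, S) = (p_r² + μ²/r²)/(2s²) + v(r) + (a/2)·S² + T·log s`. -/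
noncomputable def Hred (μ a T : ℝ) (v : ℝ → ℝ) (r pr s S : ℝ) : ℝ :=
  (pr ^ 2 + μ ^ 2 / r ^ 2) / (2 * s ^ 2) + v r + a / 2 * S ^ 2 + T * Real.log s

/-- Partial derivative of a function of four real variables in the `i`-th
coordinate direction. -/
noncomputable def pder (i : Fin 4) (F : (Fin 4 → ℝ) → ℝ) : (Fin 4 → ℝ) → ℝ :=
  fun x => deriv (fun t : ℝ => F (Function.update x i t)) (x i)

lemma pder_eq (i : Fin 4) (G : (Fin 4 → ℝ) → ℝ) (p : Fin 4 → ℝ) :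
    pder i G p = deriv (fun t : ℝ => G (Function.update p i t)) (p i) := rfl

lemma hasDerivAt_cpow (c x : ℝ) (n : ℕ) (hn : 0 < n) (hx : x ≠ 0) :
    HasDerivAt (fun t : ℝ => c / t ^ n) (-(n * c) / x ^ (n+1)) x := by
  have h := ((hasDerivAt_pow n x).inv (pow_ne_zero n hx)).const_mul c
  have h2 : c * (-(↑n * x ^ (n - 1)) / (x ^ n) ^ 2) = -(n * c) / x ^ (n+1) := by
    rcases Nat.exists_eq_succ_of_ne_zero hn.ne' with ⟨m, rfl⟩
    simp only [Nat.succ_sub_one, Nat.succ_eq_add_one]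
    field_simp
    ring
  rw [h2] at h
  exact h.congr_of_eventuallyEq (by filter_upwards with t; rw [div_eq_mul_inv]; rfl)

section pdlemmas
variable (μ a T : ℝ) (v : ℝ → ℝ)

lemma pd0 (y : Fin 4 → ℝ) (hy0 : y 0 ≠ 0) (hy2 : y 2 ≠ 0)
    (hdv : DifferentiableAt ℝ v (y 0)) :
    pder 0 (fun x => Hred μ a T v (x 0) (x 1) (x 2) (x 3)) y
      = -(μ ^ 2) / ((y 0) ^ 3 * (y 2) ^ 2) + deriv v (y 0) := by
  have heq : (fun t : ℝ => Hred μ a T v (Function.update y 0 t 0)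
      (Function.update y 0 t 1) (Function.update y 0 t 2) (Function.update y 0 t 3))
      = fun t : ℝ => ((y 1 ^ 2 / (2 * (y 2) ^ 2) + (μ ^ 2 / (2 * (y 2) ^ 2)) / t ^ 2) + v t)
          + (a / 2 * (y 3) ^ 2 + T * Real.log (y 2)) := by
    funext t
    simp only [Hred, Function.update_self,
      Function.update_of_ne (show ((1:Fin 4)) ≠ 0 by decide),
      Function.update_of_ne (show ((2:Fin 4)) ≠ 0 by decide),
      Function.update_of_ne (show ((3:Fin 4)) ≠ 0 by decide)]
    ring
  rw [pder_eq, heq]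
  have h1 : HasDerivAt (fun t : ℝ => y 1 ^ 2 / (2 * (y 2) ^ 2) + (μ ^ 2 / (2 * (y 2) ^ 2)) / t ^ 2)
      (-(2 * (μ ^ 2 / (2 * (y 2) ^ 2))) / (y 0) ^ 3)
      (y 0) := by
    simpa using (hasDerivAt_cpow (μ ^ 2 / (2 * (y 2) ^ 2)) (y 0) 2 two_pos hy0).const_add
      (y 1 ^ 2 / (2 * (y 2) ^ 2))
  have H := ((h1.add hdv.hasDerivAt).add_const (a / 2 * (y 3) ^ 2 + T * Real.log (y 2)))
  have H' := H.deriv; simp only [Pi.add_apply] at H'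
  rw [H']
  field_simp

lemma pd1 (y : Fin 4 → ℝ) :
    pder 1 (fun x => Hred μ a T v (x 0) (x 1) (x 2) (x 3)) y
      = y 1 / (y 2) ^ 2 := by
  have heq : (fun t : ℝ => Hred μ a T v (Function.update y 1 t 0)
      (Function.update y 1 t 1) (Function.update y 1 t 2) (Function.update y 1 t 3))
      = fun t : ℝ => (1 / (2 * (y 2) ^ 2)) * t ^ 2
          + (μ ^ 2 / (y 0) ^ 2 / (2 * (y 2) ^ 2) + v (y 0)
              + a / 2 * (y 3) ^ 2 + T * Real.log (y 2)) := by
    funext t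
    simp only [Hred, Function.update_self,
      Function.update_of_ne (show ((0:Fin 4)) ≠ 1 by decide),
      Function.update_of_ne (show ((2:Fin 4)) ≠ 1 by decide),
      Function.update_of_ne (show ((3:Fin 4)) ≠ 1 by decide)]
    ring
  rw [pder_eq, heq]
  have H := (((hasDerivAt_pow 2 (y 1)).const_mul (1 / (2 * (y 2) ^ 2))).add_const
    (μ ^ 2 / (y 0) ^ 2 / (2 * (y 2) ^ 2) + v (y 0) + a / 2 * (y 3) ^ 2 + T * Real.log (y 2)))
  rw [H.deriv]
  norm_num
  ring

lemma pd2 (y : Fin 4 → ℝ) (hy2 : y 2 ≠ 0) :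
    pder 2 (fun x => Hred μ a T v (x 0) (x 1) (x 2) (x 3)) y
      = -((y 1) ^ 2 + μ ^ 2 / (y 0) ^ 2) / (y 2) ^ 3 + T / (y 2) := by
  have heq : (fun t : ℝ => Hred μ a T v (Function.update y 2 t 0)
      (Function.update y 2 t 1) (Function.update y 2 t 2) (Function.update y 2 t 3))
      = fun t : ℝ => ((((y 1) ^ 2 + μ ^ 2 / (y 0) ^ 2) / 2) / t ^ 2
          + (v (y 0) + a / 2 * (y 3) ^ 2)) + T * Real.log t := by
    funext t
    simp only [Hred, Function.update_self,
      Function.update_of_ne (show ((0:Fin 4)) ≠ 2 by decide),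
      Function.update_of_ne (show ((1:Fin 4)) ≠ 2 by decide),
      Function.update_of_ne (show ((3:Fin 4)) ≠ 2 by decide)]
    ring
  rw [pder_eq, heq]
  have H := (((hasDerivAt_cpow (((y 1) ^ 2 + μ ^ 2 / (y 0) ^ 2) / 2) (y 2) 2 two_pos hy2).add_const
      (v (y 0) + a / 2 * (y 3) ^ 2)).add ((Real.hasDerivAt_log hy2).const_mul T))
  have H' := H.deriv; simp only [Pi.add_def] at H'
  rw [H']
  field_simp
  ring

lemma pd3 (y : Fin 4 → ℝ) :
    pder 3 (fun x => Hred μ a T v (x 0) (x 1) (x 2) (x 3)) y = a * y 3 := by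
  have heq : (fun t : ℝ => Hred μ a T v (Function.update y 3 t 0)
      (Function.update y 3 t 1) (Function.update y 3 t 2) (Function.update y 3 t 3))
      = fun t : ℝ => (a / 2) * t ^ 2
          + (((y 1) ^ 2 + μ ^ 2 / (y 0) ^ 2) / (2 * (y 2) ^ 2) + v (y 0) + T * Real.log (y 2)) := by
    funext t
    simp only [Hred, Function.update_self,
      Function.update_of_ne (show ((0:Fin 4)) ≠ 3 by decide),
      Function.update_of_ne (show ((1:Fin 4)) ≠ 3 by decide),
      Function.update_of_ne (show ((2:Fin 4)) ≠ 3 by decide)]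
    ring
  rw [pder_eq, heq]
  have H := ((hasDerivAt_pow 2 (y 3)).const_mul (a / 2)).add_const
    (((y 1) ^ 2 + μ ^ 2 / (y 0) ^ 2) / (2 * (y 2) ^ 2) + v (y 0) + T * Real.log (y 2))
  rw [H.deriv]
  norm_num
  ring

end pdlemmas

/-- At a relative equilibrium `(r₀, 0, s₀, 0)` (i.e. `T = r₀ v'(r₀)`,
`μ² = s₀² r₀³ v'(r₀)`) with `v'(r₀) > 0` and `r₀ v''(r₀) + v'(r₀) > 0`
(hypotheses H1, H2), the Hessian of the reduced Nosé-thermostated Hamiltonian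
`𝐇_μ` in the variables `(r, p_r, s, S)` is positive definite. -/
theorem hessian_posDef (μ a T : ℝ) (hμ : μ ≠ 0) (ha : 0 < a) (hT : 0 < T)
    (v : ℝ → ℝ)
    (hv : ∀ r > (0:ℝ), DifferentiableAt ℝ v r ∧ DifferentiableAt ℝ (deriv v) r)
    (r₀ s₀ : ℝ) (hr₀ : 0 < r₀) (hs₀ : 0 < s₀)
    (e1 : T = r₀ * deriv v r₀) (e2 : μ ^ 2 = s₀ ^ 2 * r₀ ^ 3 * deriv v r₀)
    (h1 : 0 < deriv v r₀) (h2 : 0 < r₀ * deriv (deriv v) r₀ + deriv v r₀) :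
    (Matrix.of fun i j : Fin 4 =>
      pder i (pder j (fun x => Hred μ a T v (x 0) (x 1) (x 2) (x 3)))
        ![r₀, 0, s₀, 0]).PosDef := by
  have hr0' : r₀ ≠ 0 := hr₀.ne'
  have hs0' : s₀ ≠ 0 := hs₀.ne'
  set F : (Fin 4 → ℝ) → ℝ := fun x => Hred μ a T v (x 0) (x 1) (x 2) (x 3) with hF
  set A : ℝ := 3 * deriv v r₀ / r₀ + deriv (deriv v) r₀ with hA_def
  set B : ℝ := 2 * deriv v r₀ / s₀ with hB_def
  set c : ℝ := 1 / s₀ ^ 2 with hc_def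
  set D : ℝ := 2 * r₀ * deriv v r₀ / s₀ ^ 2 with hD_def
  clear_value F A B c D
  -- update evaluation lemmas
  have U0 : ∀ t : ℝ, Function.update (![r₀, 0, s₀, 0] : Fin 4 → ℝ) 0 t = ![t, 0, s₀, 0] := by
    intro t; ext k; fin_cases k <;> simp [Function.update]
  have U1 : ∀ t : ℝ, Function.update (![r₀, 0, s₀, 0] : Fin 4 → ℝ) 1 t = ![r₀, t, s₀, 0] := by
    intro t; ext k; fin_cases k <;> simp [Function.update]
  have U2 : ∀ t : ℝ, Function.update (![r₀, 0, s₀, 0] : Fin 4 → ℝ) 2 t = ![r₀, 0, t, 0] := by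
    intro t; ext k; fin_cases k <;> simp [Function.update]
  have U3 : ∀ t : ℝ, Function.update (![r₀, 0, s₀, 0] : Fin 4 → ℝ) 3 t = ![r₀, 0, s₀, t] := by
    intro t; ext k; fin_cases k <;> simp [Function.update]
  have hp0 : (![r₀, (0:ℝ), s₀, 0]) 0 = r₀ := rfl
  have hp1 : (![r₀, (0:ℝ), s₀, 0]) 1 = 0 := rfl
  have hp2 : (![r₀, (0:ℝ), s₀, 0]) 2 = s₀ := rfl
  have hp3 : (![r₀, (0:ℝ), s₀, 0]) 3 = 0 := rfl
  -- the sixteen entries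
  have E00 : pder 0 (pder 0 F) ![r₀, 0, s₀, 0] = A := by
    rw [pder_eq]; simp only [U0, hp0]
    have hev : (fun t : ℝ => pder 0 F ![t, 0, s₀, 0])
        =ᶠ[nhds r₀] fun t : ℝ => (-(μ ^ 2) / s₀ ^ 2) / t ^ 3 + deriv v t := by
      filter_upwards [eventually_gt_nhds hr₀] with t ht
      rw [hF, pd0 μ a T v ![t, 0, s₀, 0] (by simpa using ht.ne') (by simpa using hs0')
        (by simpa using (hv t ht).1)]
      show -(μ ^ 2) / (t ^ 3 * s₀ ^ 2) + deriv v t = _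
      rw [div_div, mul_comm (s₀ ^ 2) (t ^ 3)]
    rw [hev.deriv_eq]
    have H := (hasDerivAt_cpow (-(μ ^ 2) / s₀ ^ 2) r₀ 3 (by norm_num) hr0').add
      ((hv r₀ hr₀).2.hasDerivAt)
    have H' := H.deriv; simp only [Pi.add_def] at H'
    rw [H', hA_def, e2]
    push_cast
    field_simp
  have E01 : pder 0 (pder 1 F) ![r₀, 0, s₀, 0] = 0 := by
    rw [pder_eq]; simp only [U0, hp0]
    have hev : (fun t : ℝ => pder 1 F ![t, 0, s₀, 0]) =ᶠ[nhds r₀] fun _ : ℝ => (0:ℝ) := by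
      filter_upwards with t
      rw [hF, pd1 μ a T v ![t, 0, s₀, 0]]; simp
    rw [hev.deriv_eq, deriv_const]
  have E02 : pder 0 (pder 2 F) ![r₀, 0, s₀, 0] = B := by
    rw [pder_eq]; simp only [U0, hp0]
    have hev : (fun t : ℝ => pder 2 F ![t, 0, s₀, 0])
        =ᶠ[nhds r₀] fun t : ℝ => (-(μ ^ 2) / s₀ ^ 3) / t ^ 2 + T / s₀ := by
      filter_upwards [eventually_gt_nhds hr₀] with t ht
      rw [hF, pd2 μ a T v ![t, 0, s₀, 0] (by simpa using hs0')]
      show -((0:ℝ) ^ 2 + μ ^ 2 / t ^ 2) / s₀ ^ 3 + T / s₀ = _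
      have ht' : t ≠ 0 := ht.ne'
      field_simp
      ring
    rw [hev.deriv_eq]
    have H := (hasDerivAt_cpow (-(μ ^ 2) / s₀ ^ 3) r₀ 2 (by norm_num) hr0').add_const (T / s₀)
    rw [H.deriv, hB_def, e2]
    push_cast
    field_simp
  have E03 : pder 0 (pder 3 F) ![r₀, 0, s₀, 0] = 0 := by
    rw [pder_eq]; simp only [U0, hp0]
    have hev : (fun t : ℝ => pder 3 F ![t, 0, s₀, 0]) =ᶠ[nhds r₀] fun _ : ℝ => (0:ℝ) := by
      filter_upwards with t
      rw [hF, pd3 μ a T v ![t, 0, s₀, 0]]; simp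
    rw [hev.deriv_eq, deriv_const]
  have E10 : pder 1 (pder 0 F) ![r₀, 0, s₀, 0] = 0 := by
    rw [pder_eq]; simp only [U1, hp1]
    have hev : (fun t : ℝ => pder 0 F ![r₀, t, s₀, 0])
        =ᶠ[nhds (0:ℝ)] fun _ : ℝ => -(μ ^ 2) / (r₀ ^ 3 * s₀ ^ 2) + deriv v r₀ := by
      filter_upwards with t
      rw [hF, pd0 μ a T v ![r₀, t, s₀, 0] (by simpa using hr0') (by simpa using hs0')
          (by simpa using (hv r₀ hr₀).1)]
      simp only [Matrix.cons_val]
    rw [hev.deriv_eq, deriv_const]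
  have E11 : pder 1 (pder 1 F) ![r₀, 0, s₀, 0] = c := by
    rw [pder_eq]; simp only [U1, hp1]
    have hev : (fun t : ℝ => pder 1 F ![r₀, t, s₀, 0])
        =ᶠ[nhds (0:ℝ)] fun t : ℝ => t / s₀ ^ 2 := by
      filter_upwards with t
      rw [hF, pd1 μ a T v ![r₀, t, s₀, 0]]
      simp only [Matrix.cons_val]
    rw [hev.deriv_eq]
    have H : HasDerivAt (fun t : ℝ => t / s₀ ^ 2) (1 / s₀ ^ 2) 0 := by
      simpa using (hasDerivAt_id (0:ℝ)).div_const (s₀ ^ 2)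
    rw [H.deriv, hc_def]
  have E12 : pder 1 (pder 2 F) ![r₀, 0, s₀, 0] = 0 := by
    rw [pder_eq]; simp only [U1, hp1]
    have hev : (fun t : ℝ => pder 2 F ![r₀, t, s₀, 0])
        =ᶠ[nhds (0:ℝ)] fun t : ℝ => (-(1 / s₀ ^ 3)) * t ^ 2
          + (-(μ ^ 2 / r₀ ^ 2) / s₀ ^ 3 + T / s₀) := by
      filter_upwards with t
      rw [hF, pd2 μ a T v ![r₀, t, s₀, 0] (by simpa using hs0')]
      show -(t ^ 2 + μ ^ 2 / r₀ ^ 2) / s₀ ^ 3 + T / s₀ = _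
      field_simp
      ring
    rw [hev.deriv_eq]
    have H := ((hasDerivAt_pow 2 (0:ℝ)).const_mul (-(1 / s₀ ^ 3))).add_const
      (-(μ ^ 2 / r₀ ^ 2) / s₀ ^ 3 + T / s₀)
    rw [H.deriv]
    norm_num
  have E13 : pder 1 (pder 3 F) ![r₀, 0, s₀, 0] = 0 := by
    rw [pder_eq]; simp only [U1, hp1]
    have hev : (fun t : ℝ => pder 3 F ![r₀, t, s₀, 0]) =ᶠ[nhds (0:ℝ)] fun _ : ℝ => (0:ℝ) := by
      filter_upwards with t
      rw [hF, pd3 μ a T v ![r₀, t, s₀, 0]]; simp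
    rw [hev.deriv_eq, deriv_const]
  have E20 : pder 2 (pder 0 F) ![r₀, 0, s₀, 0] = B := by
    rw [pder_eq]; simp only [U2, hp2]
    have hev : (fun t : ℝ => pder 0 F ![r₀, 0, t, 0])
        =ᶠ[nhds s₀] fun t : ℝ => (-(μ ^ 2) / r₀ ^ 3) / t ^ 2 + deriv v r₀ := by
      filter_upwards [eventually_gt_nhds hs₀] with t ht
      rw [hF, pd0 μ a T v ![r₀, 0, t, 0] (by simpa using hr0') (by simpa using ht.ne')
        (by simpa using (hv r₀ hr₀).1)]
      show -(μ ^ 2) / (r₀ ^ 3 * t ^ 2) + deriv v r₀ = _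
      have ht' : t ≠ 0 := ht.ne'
      field_simp
    rw [hev.deriv_eq]
    have H := (hasDerivAt_cpow (-(μ ^ 2) / r₀ ^ 3) s₀ 2 (by norm_num) hs0').add_const (deriv v r₀)
    rw [H.deriv, hB_def, e2]
    push_cast
    field_simp
  have E21 : pder 2 (pder 1 F) ![r₀, 0, s₀, 0] = 0 := by
    rw [pder_eq]; simp only [U2, hp2]
    have hev : (fun t : ℝ => pder 1 F ![r₀, 0, t, 0]) =ᶠ[nhds s₀] fun _ : ℝ => (0:ℝ) := by
      filter_upwards with t
      rw [hF, pd1 μ a T v ![r₀, 0, t, 0]]; simp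
    rw [hev.deriv_eq, deriv_const]
  have E22 : pder 2 (pder 2 F) ![r₀, 0, s₀, 0] = D := by
    rw [pder_eq]; simp only [U2, hp2]
    have hev : (fun t : ℝ => pder 2 F ![r₀, 0, t, 0])
        =ᶠ[nhds s₀] fun t : ℝ => (-(μ ^ 2 / r₀ ^ 2)) / t ^ 3 + T / t ^ 1 := by
      filter_upwards [eventually_gt_nhds hs₀] with t ht
      rw [hF, pd2 μ a T v ![r₀, 0, t, 0] (by simpa using ht.ne')]
      show -((0:ℝ) ^ 2 + μ ^ 2 / r₀ ^ 2) / t ^ 3 + T / t = _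
      norm_num
    rw [hev.deriv_eq]
    have H := (hasDerivAt_cpow (-(μ ^ 2 / r₀ ^ 2)) s₀ 3 (by norm_num) hs0').add
      (hasDerivAt_cpow T s₀ 1 (by norm_num) hs0')
    have H' := H.deriv; simp only [Pi.add_def] at H'
    rw [H', hD_def, e2, e1]
    push_cast
    field_simp
    ring
  have E23 : pder 2 (pder 3 F) ![r₀, 0, s₀, 0] = 0 := by
    rw [pder_eq]; simp only [U2, hp2]
    have hev : (fun t : ℝ => pder 3 F ![r₀, 0, t, 0]) =ᶠ[nhds s₀] fun _ : ℝ => (0:ℝ) := by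
      filter_upwards with t
      rw [hF, pd3 μ a T v ![r₀, 0, t, 0]]; simp
    rw [hev.deriv_eq, deriv_const]
  have E30 : pder 3 (pder 0 F) ![r₀, 0, s₀, 0] = 0 := by
    rw [pder_eq]; simp only [U3, hp3]
    have hev : (fun t : ℝ => pder 0 F ![r₀, 0, s₀, t])
        =ᶠ[nhds (0:ℝ)] fun _ : ℝ => -(μ ^ 2) / (r₀ ^ 3 * s₀ ^ 2) + deriv v r₀ := by
      filter_upwards with t
      rw [hF, pd0 μ a T v ![r₀, 0, s₀, t] (by simpa using hr0') (by simpa using hs0')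
          (by simpa using (hv r₀ hr₀).1)]
      simp only [Matrix.cons_val]
    rw [hev.deriv_eq, deriv_const]
  have E31 : pder 3 (pder 1 F) ![r₀, 0, s₀, 0] = 0 := by
    rw [pder_eq]; simp only [U3, hp3]
    have hev : (fun t : ℝ => pder 1 F ![r₀, 0, s₀, t]) =ᶠ[nhds (0:ℝ)] fun _ : ℝ => (0:ℝ) := by
      filter_upwards with t
      rw [hF, pd1 μ a T v ![r₀, 0, s₀, t]]; simp
    rw [hev.deriv_eq, deriv_const]
  have E32 : pder 3 (pder 2 F) ![r₀, 0, s₀, 0] = 0 := by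
    rw [pder_eq]; simp only [U3, hp3]
    have hev : (fun t : ℝ => pder 2 F ![r₀, 0, s₀, t])
        =ᶠ[nhds (0:ℝ)] fun _ : ℝ => -((0:ℝ) ^ 2 + μ ^ 2 / r₀ ^ 2) / s₀ ^ 3 + T / s₀ := by
      filter_upwards with t
      rw [hF, pd2 μ a T v ![r₀, 0, s₀, t] (by simpa using hs0')]
      simp only [Matrix.cons_val]
    rw [hev.deriv_eq, deriv_const]
  have E33 : pder 3 (pder 3 F) ![r₀, 0, s₀, 0] = a := by
    rw [pder_eq]; simp only [U3, hp3]
    have hev : (fun t : ℝ => pder 3 F ![r₀, 0, s₀, t]) =ᶠ[nhds (0:ℝ)] fun t : ℝ => a * t := by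
      filter_upwards with t
      rw [hF, pd3 μ a T v ![r₀, 0, s₀, t]]
      simp only [Matrix.cons_val]
    rw [hev.deriv_eq]
    have H : HasDerivAt (fun t : ℝ => a * t) a 0 := by
      simpa using (hasDerivAt_id (0:ℝ)).const_mul a
    rw [H.deriv]
  -- assemble the matrix
  have hM : (Matrix.of fun i j : Fin 4 => pder i (pder j F) ![r₀, 0, s₀, 0])
      = !![A, 0, B, 0; 0, c, 0, 0; B, 0, D, 0; 0, 0, 0, a] := by
    ext i j
    rw [Matrix.of_apply]
    fin_cases i <;> fin_cases j
    · exact E00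
    · exact E01
    · exact E02
    · exact E03
    · exact E10
    · exact E11
    · exact E12
    · exact E13
    · exact E20
    · exact E21
    · exact E22
    · exact E23
    · exact E30
    · exact E31
    · exact E32
    · exact E33
  rw [hM]
  -- positivity of the explicit matrix
  have hA : 0 < A := by
    rw [hA_def, show 3 * deriv v r₀ / r₀ + deriv (deriv v) r₀
      = (2 * deriv v r₀ + (r₀ * deriv (deriv v) r₀ + deriv v r₀)) / r₀ by field_simp; ring]
    exact div_pos (by linarith) hr₀
  have hc : 0 < c := by rw [hc_def]; positivity
  have hD : 0 < D := by
    rw [hD_def]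
    exact div_pos (by positivity) (by positivity)
  have hdet : B ^ 2 < A * D := by
    have key : A * D - B ^ 2
        = 2 * deriv v r₀ * (r₀ * deriv (deriv v) r₀ + deriv v r₀) / s₀ ^ 2 := by
      rw [hA_def, hB_def, hD_def]
      field_simp
      ring
    linarith [key, div_pos (mul_pos (by linarith : (0:ℝ) < 2 * deriv v r₀) h2) (pow_pos hs₀ 2)]
  clear E00 E01 E02 E03 E10 E11 E12 E13 E20 E21 E22 E23 E30 E31 E32 E33
  clear U0 U1 U2 U3 hp0 hp1 hp2 hp3 hM hF hA_def hB_def hc_def hD_def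
  clear hv e1 e2 h1 h2 hμ hT hr₀ hs₀ hr0' hs0' F v μ T r₀ s₀
  rw [Matrix.posDef_iff_dotProduct_mulVec]
  constructor
  · ext i j
    fin_cases i <;> fin_cases j <;>
      simp [Matrix.conjTranspose_apply, Matrix.vecHead, Matrix.vecTail]
  · intro x hx
    have hQ : dotProduct (star x)
        ((!![A,0,B,0; 0,c,0,0; B,0,D,0; 0,0,0,a] : Matrix (Fin 4) (Fin 4) ℝ).mulVec x)
        = A*(x 0)^2 + 2*B*(x 0)*(x 2) + c*(x 1)^2 + D*(x 2)^2 + a*(x 3)^2 := by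
      simp [Matrix.mulVec, dotProduct, Fin.sum_univ_four, Matrix.vecHead, Matrix.vecTail]
      ring
    rw [hQ]
    obtain ⟨i, hi⟩ := Function.ne_iff.mp hx
    fin_cases i
    · replace hi : x 0 ≠ 0 := by simpa using hi
      have h0 : 0 < (x 0)^2 := by positivity
      nlinarith [sq_nonneg (B*(x 0) + D*(x 2)), mul_pos (sub_pos.mpr hdet) h0,
        mul_nonneg (mul_pos hD hc).le (sq_nonneg (x 1)),
        mul_nonneg (mul_pos hD ha).le (sq_nonneg (x 3)), hD]
    · replace hi : x 1 ≠ 0 := by simpa using hi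
      have h0 : 0 < (x 1)^2 := by positivity
      nlinarith [sq_nonneg (A*(x 0) + B*(x 2)), mul_nonneg (sub_pos.mpr hdet).le (sq_nonneg (x 2)),
        mul_pos (mul_pos hA hc) h0,
        mul_nonneg (mul_pos hA ha).le (sq_nonneg (x 3)), hA]
    · replace hi : x 2 ≠ 0 := by simpa using hi
      have h0 : 0 < (x 2)^2 := by positivity
      nlinarith [sq_nonneg (A*(x 0) + B*(x 2)), mul_pos (sub_pos.mpr hdet) h0,
        mul_nonneg (mul_pos hA hc).le (sq_nonneg (x 1)),
        mul_nonneg (mul_pos hA ha).le (sq_nonneg (x 3)), hA]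
    · replace hi : x 3 ≠ 0 := by simpa using hi
      have h0 : 0 < (x 3)^2 := by positivity
      nlinarith [sq_nonneg (A*(x 0) + B*(x 2)), mul_nonneg (sub_pos.mpr hdet).le (sq_nonneg (x 2)),
        mul_pos (mul_pos hA ha) h0,
        mul_nonneg (mul_pos hA hc).le (sq_nonneg (x 1)), hA]
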